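/- Let p ≡ 1 (mod 8) be prime, √2 ∈ 𝔽_p a square root of 2, and write p = a² + b² with a odd, b even, a + b ≡ 1 (mod 4). Then 1+√2 is a square in 𝔽_p if and only if (a-1)² + b² ≡ 0 (mod 32). -/

import Mathlib

private lemma jacAux13 {p : ℕ} (hpodd : Odd p) (hp4 : p % 4 = 1) (x : ℤ) (hx : Odd x) :
    jacobiSym x p = jacobiSym (p : ℤ) x.natAbs := by
  have hA : Odd x.natAbs := Int.natAbs_odd.mpr hx
  rcases Int.natAbs_eq x with h | h
  · nth_rewrite 1 [h]; exact jacobiSym.quadratic_reciprocity_one_mod_four' hA hp4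
  · nth_rewrite 1 [h]
    rw [jacobiSym.neg _ hpodd, ZMod.χ₄_nat_one_mod_four hp4, one_mul]
    exact jacobiSym.quadratic_reciprocity_one_mod_four' hA hp4

theorem stmt13 (p : ℕ) (hp : p.Prime) (h8 : p % 8 = 1) (s : ZMod p) (hs : s ^ 2 = 2)
    (a b : ℤ) (hab : (p : ℤ) = a ^ 2 + b ^ 2)
    (ha : Odd a) (hb : Even b) (habm : (a + b) % 4 = 1) :
    IsSquare (1 + s) ↔ ((a - 1) ^ 2 + b ^ 2) % 32 = 0 := by
  haveI : Fact p.Prime := ⟨hp⟩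
  have hple : 2 ≤ p := hp.two_le
  have hp2 : p ≠ 2 := by omega
  have hpodd : Odd p := by rcases Nat.even_or_odd p with h | h; · exfalso; obtain ⟨m,hm⟩ := h; omega
                           · exact h
  have hp4 : p % 4 = 1 := by omega
  have hpne : (p : ℤ) ≠ 0 := by exact_mod_cast hp.ne_zero
  have hprime : Prime (p : ℤ) := Nat.prime_iff_prime_int.mp hp
  -- p does not divide b
  have hpb : ¬ (p : ℤ) ∣ b := by
    intro hdvd
    have hda : (p : ℤ) ∣ a := by
      refine hprime.dvd_of_dvd_pow (n := 2) ?_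
      have : a ^ 2 = (p : ℤ) - b ^ 2 := by omega
      rw [this]
      exact dvd_sub dvd_rfl (dvd_pow hdvd two_ne_zero)
    obtain ⟨u, hu⟩ := hdvd
    obtain ⟨v, hv⟩ := hda
    have h1 : (p : ℤ) * 1 = (p : ℤ) * ((p : ℤ) * (v ^ 2 + u ^ 2)) := by
      rw [mul_one]; nth_rewrite 1 [hab]; rw [hu, hv]; ring
    have h2 : (1 : ℤ) = (p : ℤ) * (v ^ 2 + u ^ 2) := mul_left_cancel₀ hpne h1
    have h3 : (p : ℤ) ∣ 1 := Dvd.intro _ h2.symm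
    have := Int.le_of_dvd one_pos h3
    omega
  -- p does not divide a
  have hpa : ¬ (p : ℤ) ∣ a := by
    intro hdvd
    have hdb : (p : ℤ) ∣ b := by
      refine hprime.dvd_of_dvd_pow (n := 2) ?_
      have : b ^ 2 = (p : ℤ) - a ^ 2 := by omega
      rw [this]
      exact dvd_sub dvd_rfl (dvd_pow hdvd two_ne_zero)
    exact hpb hdb
  -- p does not divide a + b
  have hpab : ¬ (p : ℤ) ∣ (a + b) := by
    intro hdvd
    have h1 : (p : ℤ) ∣ 2 * a * b := by
      have e : 2 * a * b = (a + b) ^ 2 - (p : ℤ) := by rw [hab]; ring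
      rw [e]
      exact dvd_sub (dvd_pow hdvd two_ne_zero) dvd_rfl
    rcases hprime.dvd_mul.mp h1 with h2 | h2
    · rcases hprime.dvd_mul.mp h2 with h3 | h3
      · have := Int.le_of_dvd (by norm_num) h3
        omega
      · exact hpa h3
    · exact hpb h2
  -- gcd a b = 1
  have hg : Int.gcd a b = 1 := by
    set g := Int.gcd a b with hgdef
    have hga : (g : ℤ) ∣ a := Int.gcd_dvd_left _ _
    have hgb : (g : ℤ) ∣ b := Int.gcd_dvd_right _ _
    have hgp : (g : ℤ) ^ 2 ∣ (p : ℤ) := by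
      rw [hab]
      exact dvd_add (pow_dvd_pow_of_dvd hga 2) (pow_dvd_pow_of_dvd hgb 2)
    have hgp' : g ^ 2 ∣ p := by exact_mod_cast hgp
    rcases (Nat.dvd_prime hp).mp hgp' with h1 | h1
    · exact Nat.eq_one_of_dvd_one (h1 ▸ dvd_pow_self g two_ne_zero)
    · exfalso
      have hgdvd : g ∣ p := h1 ▸ dvd_pow_self g two_ne_zero
      rcases hp.eq_one_or_self_of_dvd g hgdvd with h2 | h2
      · rw [h2] at h1; norm_num at h1; omega
      · rw [h2] at h1
        have h3 : p * p = p * 1 := by nlinarith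
        have := Nat.eq_of_mul_eq_mul_left (by omega) h3
        omega
  have hco : IsCoprime a b := Int.isCoprime_iff_gcd_eq_one.mpr hg
  -- cast facts
  have hsum0 : (a : ZMod p) ^ 2 + (b : ZMod p) ^ 2 = 0 := by
    have h0 : ((a ^ 2 + b ^ 2 : ℤ) : ZMod p) = 0 := by
      rw [← hab]; push_cast; exact_mod_cast ZMod.natCast_self p
    push_cast at h0
    exact h0
  have hbne : (b : ZMod p) ≠ 0 := by
    rw [Ne, ZMod.intCast_zmod_eq_zero_iff_dvd]; exact hpb
  have habne : ((a + b : ℤ) : ZMod p) ≠ 0 := by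
    rw [Ne, ZMod.intCast_zmod_eq_zero_iff_dvd]; exact hpab
  have h2ne : (2 : ZMod p) ≠ 0 := by
    have : ((2 : ℕ) : ZMod p) ≠ 0 := by
      rw [Ne, ZMod.natCast_eq_zero_iff]
      intro h; have := Nat.le_of_dvd (by norm_num) h; omega
    exact_mod_cast this
  have hsne : s ≠ 0 := by
    intro h; rw [h] at hs; simp at hs; exact h2ne hs.symm
  -- the square root of -1
  set i : ZMod p := (a : ZMod p) * (b : ZMod p)⁻¹ with hidef
  have hi2 : i ^ 2 = -1 := by
    rw [hidef]
    field_simp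
    linear_combination hsum0
  have hine : (1 : ZMod p) + i ≠ 0 := by
    intro h
    exact h2ne (by linear_combination (1 - i) * h + hi2)
  set ζ : ZMod p := (1 + i) * s⁻¹ with hzdef
  have hsζ : s * ζ = 1 + i := by
    rw [hzdef]
    field_simp
  have hζ2 : ζ ^ 2 = i := by
    have h2ζ : (2 : ZMod p) * ζ ^ 2 = 2 * i := by
      linear_combination (s * ζ + 1 + i) * hsζ - ζ ^ 2 * hs + hi2
    exact mul_left_cancel₀ h2ne h2ζ
  have hζne : ζ ≠ 0 := by
    intro h; rw [h, mul_zero] at hsζ; exact hine hsζ.symm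
  have h1ζne : (1 : ZMod p) + ζ ≠ 0 := by
    intro h
    have hz : ζ = -1 := by linear_combination h
    rw [hz] at hζ2
    have : i = 1 := by linear_combination -hζ2
    rw [this] at hi2
    exact h2ne (by linear_combination hi2)
  have h1sne : (1 : ZMod p) + s ≠ 0 := by
    intro h
    have : ((1:ZMod p) + s) * (s - 1) = 1 := by linear_combination hs
    rw [h, zero_mul] at this
    exact zero_ne_one this
  have hkey : ((1 : ZMod p) + s) * s * ζ = (1 + ζ) ^ 2 := by
    linear_combination hsζ + ζ * hs - hζ2
  set χ := quadraticChar (ZMod p) with hχdef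
  have hχmul : χ (1 + s) * χ (1 + i) = 1 := by
    have h1 : χ ((1 + s) * s * ζ) = 1 := by
      rw [hkey]; exact quadraticChar_sq_one' h1ζne
    have h2 : χ ((1 + s) * (s * ζ)) = χ (1 + s) * χ (1 + i) := by
      rw [map_mul, hsζ]
    rw [← h2, ← mul_assoc]
    exact h1
  -- χ b = 1
  have hχ2 : χ 2 = 1 :=
    (quadraticChar_one_iff_isSquare h2ne).mpr ((ZMod.exists_sq_eq_two_iff hp2).mpr (Or.inl h8))
  have hane : (a : ZMod p) ≠ 0 := by
    rw [Ne, ZMod.intCast_zmod_eq_zero_iff_dvd]; exact hpa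
  -- χ a = 1 via reciprocity
  have hχa : χ ((a : ℤ) : ZMod p) = 1 := by
    have h1 : χ ((a : ℤ) : ZMod p) = legendreSym p a := rfl
    rw [h1, jacobiSym.legendreSym.to_jacobiSym, jacAux13 hpodd hp4 a ha]
    have hdvd : ((a.natAbs : ℤ)) ∣ (b ^ 2 - (p : ℤ)) := by
      rw [Int.natAbs_dvd]
      have : b ^ 2 - (p : ℤ) = -(a * a) := by rw [hab]; ring
      rw [this]
      exact dvd_neg.mpr (Dvd.intro _ rfl)
    have hmod : (p : ℤ) % (a.natAbs : ℤ) = (b ^ 2) % (a.natAbs : ℤ) :=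
      Int.modEq_iff_dvd.mpr hdvd
    rw [jacobiSym.mod_left' hmod]
    refine jacobiSym.sq_one' ?_
    rw [Int.gcd_def, Int.natAbs_natCast, Nat.gcd_comm]
    rw [Int.gcd_def] at hg
    exact hg
  have hχb : χ ((b : ℤ) : ZMod p) = 1 := by
    have h2ab : ((a + b : ℤ) : ZMod p) ^ 2 = 2 * ((a : ZMod p) * (b : ZMod p)) := by
      push_cast
      linear_combination hsum0
    have h1 : χ 2 * (χ ((a:ℤ) : ZMod p) * χ ((b:ℤ) : ZMod p)) = 1 := by
      rw [← map_mul, ← map_mul, ← h2ab]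
      exact quadraticChar_sq_one' habne
    rw [hχ2, hχa, one_mul, one_mul] at h1
    exact h1
  -- χ (1+i) = χ (a+b)
  have hχi : χ (1 + i) = χ ((a + b : ℤ) : ZMod p) := by
    have e : ((1 : ZMod p) + i) * (b : ZMod p) = ((a + b : ℤ) : ZMod p) := by
      rw [hidef]
      push_cast
      field_simp
      ring
    calc χ (1 + i) = χ (1 + i) * χ ((b:ℤ) : ZMod p) := by rw [hχb, mul_one]
    _ = χ (((1 : ZMod p) + i) * (b : ZMod p)) := by rw [map_mul]
    _ = χ ((a + b : ℤ) : ZMod p) := by rw [e]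
  -- evaluate χ (a+b)
  set S : ℕ := (a + b).natAbs with hSdef
  have hSodd : Odd S := Int.natAbs_odd.mpr (ha.add_even hb)
  have hχab : χ ((a + b : ℤ) : ZMod p) = ZMod.χ₈ (S : ZMod 8) := by
    have h1 : χ ((a + b : ℤ) : ZMod p) = legendreSym p (a + b) := rfl
    rw [h1, jacobiSym.legendreSym.to_jacobiSym, jacAux13 hpodd hp4 (a + b) (ha.add_even hb)]
    have hdvd : ((S : ℤ)) ∣ (2 * b ^ 2 - (p : ℤ)) := by
      rw [hSdef, Int.natAbs_dvd]
      have : 2 * b ^ 2 - (p : ℤ) = (a + b) * (b - a) := by rw [hab]; ring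
      rw [this]
      exact Dvd.intro _ rfl
    have hmod : (p : ℤ) % (S : ℤ) = (2 * b ^ 2) % (S : ℤ) := Int.modEq_iff_dvd.mpr hdvd
    rw [jacobiSym.mod_left' hmod]
    have hgbS : Int.gcd b (S : ℤ) = 1 := by
      have hco2 : IsCoprime b (a + b) := by
        have := (hco.symm.add_mul_left_right 1)
        simpa using this
      have := Int.isCoprime_iff_gcd_eq_one.mp hco2
      rw [Int.gcd_def] at this ⊢
      rwa [hSdef, Int.natAbs_natCast]
    have e2 : (2 * b ^ 2 : ℤ) = 2 * b ^ 2 := rfl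
    rw [jacobiSym.mul_left, jacobiSym.sq_one' hgbS, mul_one, jacobiSym.at_two hSodd]
  -- conclude χ (1+s) = χ₈ S
  have hval : χ (1 + s) = ZMod.χ₈ (S : ZMod 8) := by
    have h1 : χ ((a + b : ℤ) : ZMod p) * χ ((a + b : ℤ) : ZMod p) = 1 := by
      have := quadraticChar_sq_one habne
      rwa [pow_two] at this
    calc χ (1 + s) = χ (1 + s) * (χ ((a+b:ℤ) : ZMod p) * χ ((a+b:ℤ) : ZMod p)) := by
          rw [h1, mul_one]
    _ = (χ (1 + s) * χ (1 + i)) * χ ((a+b:ℤ) : ZMod p) := by rw [hχi]; ring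
    _ = χ ((a+b:ℤ) : ZMod p) := by rw [hχmul, one_mul]
    _ = ZMod.χ₈ (S : ZMod 8) := hχab
  -- χ₈ S = 1 ↔ (a+b) % 8 = 1
  have hcast : ((S : ℤ) = a + b) ∨ ((S : ℤ) = -(a + b)) := by
    rcases Int.natAbs_eq (a + b) with h | h
    · left; omega
    · right; omega
  have hS2 : ¬ (S % 2 = 0) := by
    rcases hSodd with ⟨k, hk⟩; omega
  have hiff8 : (ZMod.χ₈ (S : ZMod 8) = 1) ↔ (a + b) % 8 = 1 := by
    have := ZMod.χ₈_nat_eq_if_mod_eight S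
    rw [this, if_neg hS2]
    split_ifs with h
    · simp only [true_iff]
      omega
    · constructor
      · intro h1; norm_num at h1
      · intro h1; exfalso; apply h; omega
  -- main isSquare iff
  have hmain : IsSquare (1 + s) ↔ (a + b) % 8 = 1 := by
    rw [← quadraticChar_one_iff_isSquare h1sne, ← hχdef, hval, hiff8]
  rw [hmain]
  -- arithmetic finale
  have sq_mod : ∀ x : ℤ, x ^ 2 % 2 = x % 2 := by
    intro x
    rcases Int.even_or_odd x with ⟨m, hm⟩ | ⟨m, hm⟩ <;> subst hm <;> ring_nf <;> omega
  obtain ⟨k, hk⟩ := ha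
  obtain ⟨c0, hc0⟩ := hb
  have h8' : (p : ℤ) % 8 = 1 := by omega
  have hb4 : (4:ℤ) ∣ b := by
    have h2 : (2:ℤ) ∣ c0 ^ 2 := by
      have e1 : a ^ 2 + b ^ 2 - 1 = 4 * (k * (k+1) + c0 ^ 2) := by rw [hk, hc0]; ring
      obtain ⟨m, hm⟩ := Int.even_mul_succ_self k
      have := sq_mod c0
      omega
    have : (2:ℤ) ∣ c0 := by
      have := sq_mod c0
      omega
    omega
  have ha4 : a % 4 = 1 := by omega
  obtain ⟨d, hd⟩ : ∃ d, a = 4 * d + 1 := ⟨a / 4, by omega⟩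
  obtain ⟨c, hc⟩ : ∃ c, b = 4 * c := hb4
  obtain ⟨D, C, hDC, hD, hC⟩ : ∃ D C : ℤ, (a-1)^2 + b^2 = 16*D + 16*C ∧ D % 2 = d % 2 ∧ C % 2 = c % 2 :=
    ⟨d^2, c^2, by rw [hd, hc]; ring, sq_mod d, sq_mod c⟩
  omega
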